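/- Fix n ≥ 1 and let G be a 2ⁿ×2ⁿ Hermitian complex matrix with G² = I, and define U(θ) = exp(−(i θ / 2)·G) for θ ∈ ℝ. For any 2ⁿ×2ⁿ complex matrices M and ρ, the function f(θ) = Re(trace(M · U(θ) · ρ · U(θ)†)) is differentiable in θ and satisfies the parameter-shift rule: f′(θ) = (1/2)·( f(θ + π/2) − f(θ − π/2) ) for every θ ∈ ℝ. -/

import Mathlib

open Matrix

/-- The one-parameter rotation gate `U(θ) = exp(−(i θ / 2)·G)`. -/
noncomputable def gate (n : ℕ) (G : Matrix (Fin (2 ^ n)) (Fin (2 ^ n)) ℂ) (θ : ℝ) :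
    Matrix (Fin (2 ^ n)) (Fin (2 ^ n)) ℂ :=
  NormedSpace.exp ((-(Complex.I * (θ / 2))) • G)

/-- The expectation value `f(θ) = Re(tr(M · U(θ) · ρ · U(θ)†))`. -/
noncomputable def expectation (n : ℕ) (G M ρ : Matrix (Fin (2 ^ n)) (Fin (2 ^ n)) ℂ)
    (θ : ℝ) : ℝ :=
  (Matrix.trace (M * gate n G θ * ρ * (gate n G θ)ᴴ)).re

section Aux

variable {m : Type*} [Fintype m] [DecidableEq m]

lemma mulPP (G : Matrix m m ℂ) (hG2 : G * G = 1) :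
    (1+G) * (1+G) = (2:ℂ)•(1+G) := by
  simp only [mul_add, add_mul, hG2, one_mul, mul_one]; module

lemma mulQQ (G : Matrix m m ℂ) (hG2 : G * G = 1) :
    (1-G) * (1-G) = (2:ℂ)•(1-G) := by
  simp only [mul_sub, sub_mul, hG2, one_mul, mul_one]; module

lemma mulPQ (G : Matrix m m ℂ) (hG2 : G * G = 1) :
    (1+G) * (1-G) = (0 : Matrix m m ℂ) := by
  simp only [mul_sub, add_mul, hG2, one_mul, mul_one]; module

lemma mulQP (G : Matrix m m ℂ) (hG2 : G * G = 1) :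
    (1-G) * (1+G) = (0 : Matrix m m ℂ) := by
  simp only [mul_add, sub_mul, hG2, one_mul, mul_one]; module

noncomputable def involAlgHom (G : Matrix m m ℂ) (hG2 : G * G = 1) :
    (ℂ × ℂ) →ₐ[ℂ] Matrix m m ℂ :=
  AlgHom.ofLinearMap
    { toFun := fun x => x.1 • ((1/2 : ℂ) • (1 + G)) + x.2 • ((1/2 : ℂ) • (1 - G))
      map_add' := by intro x y; simp only [Prod.fst_add, Prod.snd_add, add_smul]; abel
      map_smul' := by intro c x; simp only [Prod.smul_fst, Prod.smul_snd, smul_eq_mul,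
        RingHom.id_apply, smul_add, smul_smul, mul_assoc] }
    (by
      simp only [LinearMap.coe_mk, AddHom.coe_mk, Prod.fst_one, Prod.snd_one, one_smul]
      module)
    (by
      intro x y
      simp only [LinearMap.coe_mk, AddHom.coe_mk, Prod.fst_mul, Prod.snd_mul]
      rw [add_mul, mul_add, mul_add]
      simp only [smul_mul_assoc, mul_smul_comm, smul_smul,
        mulPP G hG2, mulQQ G hG2, mulPQ G hG2, mulQP G hG2, smul_zero]
      match_scalars <;> ring)

lemma involAlgHom_continuous (G : Matrix m m ℂ) (hG2 : G * G = 1) :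
    Continuous (involAlgHom G hG2) := by
  show Continuous fun x : ℂ × ℂ => x.1 • ((1/2 : ℂ) • (1 + G)) + x.2 • ((1/2 : ℂ) • (1 - G))
  exact (continuous_fst.smul continuous_const).add (continuous_snd.smul continuous_const)

lemma exp_invol (G : Matrix m m ℂ) (hG2 : G * G = 1) (z : ℂ) :
    NormedSpace.exp (z • G)
      = Complex.exp z • ((1/2:ℂ) • (1 + G)) + Complex.exp (-z) • ((1/2:ℂ) • (1 - G)) := by
  letI : NormedRing (Matrix m m ℂ) := Matrix.frobeniusNormedRing
  letI : NormedAlgebra ℂ (Matrix m m ℂ) := Matrix.frobeniusNormedAlgebra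
  have h1 : z • G = involAlgHom G hG2 (z, -z) := by
    show z • G = z • ((1/2:ℂ) • (1 + G)) + (-z) • ((1/2:ℂ) • (1 - G))
    match_scalars <;> ring
  have h2 : NormedSpace.exp ((z, -z) : ℂ × ℂ) = (Complex.exp z, Complex.exp (-z)) := by
    have := Prod.fst_exp ((z, -z) : ℂ × ℂ)
    have := Prod.snd_exp ((z, -z) : ℂ × ℂ)
    refine Prod.ext ?_ ?_ <;> simp_all [Complex.exp_eq_exp_ℂ]
  rw [h1]
  refine (NormedSpace.map_exp (involAlgHom G hG2) (involAlgHom_continuous G hG2) (z, -z)).symm.trans ?_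
  rw [h2]
  rfl

lemma hermU {A B : Matrix m m ℂ} (hA : Aᴴ = A) (hB : Bᴴ = B) (e f : ℂ) :
    (e • A + f • B)ᴴ = star e • A + star f • B := by
  rw [conjTranspose_add, conjTranspose_smul, conjTranspose_smul, hA, hB]

lemma trace_expand (M ρ A B : Matrix m m ℂ) (a b c d : ℂ) :
    Matrix.trace (M * (a•A + b•B) * ρ * (c•A + d•B)) =
      (a*c) * Matrix.trace (M*A*ρ*A) + (a*d) * Matrix.trace (M*A*ρ*B)
        + (b*c) * Matrix.trace (M*B*ρ*A) + (b*d) * Matrix.trace (M*B*ρ*B) := by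
  simp only [Matrix.mul_add, Matrix.add_mul, smul_mul_assoc, mul_smul_comm,
    trace_add, trace_smul, smul_smul, smul_eq_mul]
  ring

end Aux

lemma gate_eq (n : ℕ) (G : Matrix (Fin (2^n)) (Fin (2^n)) ℂ) (hG2 : G * G = 1) (θ : ℝ) :
    gate n G θ = Complex.exp (-(Complex.I * (θ/2))) • ((1/2:ℂ) • (1 + G))
      + Complex.exp (Complex.I * (θ/2)) • ((1/2:ℂ) • (1 - G)) := by
  rw [gate, exp_invol G hG2, neg_neg]

lemma expectation_closed (n : ℕ) (G : Matrix (Fin (2^n)) (Fin (2^n)) ℂ)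
    (hG : G.IsHermitian) (hG2 : G * G = 1) (M ρ : Matrix (Fin (2^n)) (Fin (2^n)) ℂ) :
    ∃ A B C : ℝ, ∀ θ : ℝ,
      expectation n G M ρ θ = A + B * Real.cos θ + C * Real.sin θ := by
  have hPH : ((1/2:ℂ) • (1 + G))ᴴ = (1/2:ℂ) • (1 + G) := by
    rw [conjTranspose_smul, conjTranspose_add, conjTranspose_one, hG.eq]
    norm_num
  have hQH : ((1/2:ℂ) • (1 - G))ᴴ = (1/2:ℂ) • (1 - G) := by
    rw [conjTranspose_smul, conjTranspose_sub, conjTranspose_one, hG.eq]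
    norm_num
  set P : Matrix (Fin (2^n)) (Fin (2^n)) ℂ := (1/2:ℂ) • (1 + G) with hP
  set Q : Matrix (Fin (2^n)) (Fin (2^n)) ℂ := (1/2:ℂ) • (1 - G) with hQ
  set T0 : ℂ := Matrix.trace (M * P * ρ * P) + Matrix.trace (M * Q * ρ * Q) with hT0
  set T1 : ℂ := Matrix.trace (M * P * ρ * Q) with hT1
  set T2 : ℂ := Matrix.trace (M * Q * ρ * P) with hT2
  refine ⟨T0.re, T1.re + T2.re, T1.im - T2.im, fun θ => ?_⟩
  have key : Matrix.trace (M * gate n G θ * ρ * (gate n G θ)ᴴ)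
      = T0 + Complex.exp (-(Complex.I * θ)) * T1 + Complex.exp (Complex.I * θ) * T2 := by
    set e : ℂ := Complex.exp (-(Complex.I * (θ/2))) with he
    set f : ℂ := Complex.exp (Complex.I * (θ/2)) with hf
    have hef : e * f = 1 := by
      rw [he, hf, ← Complex.exp_add, neg_add_cancel, Complex.exp_zero]
    have hee : e * e = Complex.exp (-(Complex.I * θ)) := by
      rw [he, ← Complex.exp_add]; congr 1; push_cast; ring
    have hff : f * f = Complex.exp (Complex.I * θ) := by
      rw [hf, ← Complex.exp_add]; congr 1; push_cast; ring
    have hstar_e : star e = f := by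
      rw [he, hf, Complex.star_def, ← Complex.exp_conj]
      congr 1
      rw [map_neg, _root_.map_mul, map_div₀, Complex.conj_I, Complex.conj_ofReal,
        Complex.conj_ofNat]
      ring
    rw [gate_eq n G hG2 θ, ← he, ← hf, ← hP, ← hQ, hermU hPH hQH, hstar_e,
      ← hstar_e, star_star, hstar_e]
    rw [trace_expand, ← hT1, ← hT2]
    have hfe : f * e = 1 := by rw [mul_comm]; exact hef
    rw [hef, hfe, hee, hff, hT0]
    ring
  show (Matrix.trace (M * gate n G θ * ρ * (gate n G θ)ᴴ)).re = _
  rw [key]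
  simp only [Complex.add_re, Complex.mul_re, Complex.exp_re, Complex.exp_im,
    Complex.neg_re, Complex.neg_im, Complex.mul_re, Complex.mul_im, Complex.I_re,
    Complex.I_im, Complex.ofReal_re, Complex.ofReal_im]
  simp [Real.cos_neg, Real.sin_neg]
  ring

/-- The parameter-shift rule: `f` is differentiable in `θ` with derivative
`f′(θ) = (f(θ + π/2) − f(θ − π/2)) / 2`. -/
theorem parameter_shift_rule (n : ℕ) (hn : 1 ≤ n)
    (G : Matrix (Fin (2 ^ n)) (Fin (2 ^ n)) ℂ) (hG : G.IsHermitian) (hG2 : G * G = 1)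
    (M ρ : Matrix (Fin (2 ^ n)) (Fin (2 ^ n)) ℂ) (θ : ℝ) :
    HasDerivAt (expectation n G M ρ)
      ((expectation n G M ρ (θ + Real.pi / 2) - expectation n G M ρ (θ - Real.pi / 2)) / 2)
      θ := by
  obtain ⟨A, B, C, hABC⟩ := expectation_closed n G hG hG2 M ρ
  have hfn : expectation n G M ρ = fun t => A + B * Real.cos t + C * Real.sin t :=
    funext hABC
  rw [hfn]
  have hd : HasDerivAt (fun t : ℝ => A + B * Real.cos t + C * Real.sin t)
      (0 + B * -Real.sin θ + C * Real.cos θ) θ :=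
    (((hasDerivAt_const θ A).add ((Real.hasDerivAt_cos θ).const_mul B)).add
      ((Real.hasDerivAt_sin θ).const_mul C))
  convert hd using 1
  simp only [Real.cos_add, Real.sin_add, Real.cos_sub, Real.sin_sub,
    Real.cos_pi_div_two, Real.sin_pi_div_two]
  ring
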